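/- Let $p, q$ be distinct primes, $1 \le \ell$ and $0 \le k \le \ell-1$. In the Burnside ring $R_\ell$ of $C_{p^\ell}$, there is no ideal strictly between $J_{\ell,k+1}(q)$ and $J_{\ell,k}(q)$: any ideal $I$ with $J_{\ell,k+1}(q) \subseteq I \subseteq J_{\ell,k}(q)$ equals $J_{\ell,k+1}(q)$ or $J_{\ell,k}(q)$. -/
import Mathlib


/-! We model the Burnside ring of the cyclic group `C_{p^ℓ}` via its (injective) mark
homomorphism: `Xe p ℓ i` is the vector of marks of the transitive `C_{p^ℓ}`-set
`C_{p^ℓ}/C_{p^i}`, namely `j ↦ #(fixed points of C_{p^j})`, stabilized for `j ≥ ℓ`.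
The Burnside ring `BR p ℓ` is the subring of `ℕ → ℤ` generated by these mark vectors. -/

/-- Marks of the basis element `X_{ℓ,i} = [C_{p^ℓ}/C_{p^i}]`. -/
def Xe (p l i : ℕ) : ℕ → ℤ := fun j => if min j l ≤ i then (p : ℤ) ^ (l - i) else 0

/-- The Burnside ring of `C_{p^ℓ}`, realized as a subring of the ghost ring `ℕ → ℤ`. -/
def BR (p l : ℕ) : Subring (ℕ → ℤ) := Subring.closure (Set.range (Xe p l))

/-- The basis element `X_{ℓ,i}` as an element of the Burnside ring. -/
def Xb (p l i : ℕ) : BR p l := ⟨Xe p l i, Subring.subset_closure ⟨i, rfl⟩⟩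

/-- `F_{ℓ,i} = X_{ℓ,i} - p^{ℓ-i}` in the Burnside ring. -/
def Fb (p l i : ℕ) : BR p l := Xb p l i - (p : BR p l) ^ (l - i)

/-- `F_{ℓ,i} = X_{ℓ,i} - p^{ℓ-i}` as a mark vector. -/
def Fe (p l i : ℕ) : ℕ → ℤ := Xe p l i - (p : ℕ → ℤ) ^ (l - i)

/-- Restriction `res^ℓ_k` to the subgroup `C_{p^k}` on mark vectors: truncation of marks. -/
def resA (k : ℕ) : (ℕ → ℤ) →+* (ℕ → ℤ) :=
  Pi.ringHom fun j => Pi.evalRingHom (fun _ => ℤ) (min j k)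

/-- Additive transfer (induction) `ind^{m+1}_m` on mark vectors. -/
def indA (p m : ℕ) (a : ℕ → ℤ) : ℕ → ℤ := fun j => if j ≤ m then p * a j else 0

/-- Multiplicative transfer (norm) `jnd^{m+1}_m` on mark vectors. -/
def jndA (p m : ℕ) (a : ℕ → ℤ) : ℕ → ℤ := fun j => if j ≤ m then (a j) ^ p else a m

/-- The ideal `J_{ℓ,k}(x) = (x, F_{ℓ,k}, …, F_{ℓ,ℓ-1})` of the Burnside ring. -/
def Jb (p l k : ℕ) (x : ℤ) : Ideal (BR p l) :=
  Ideal.span (insert (x : BR p l) (Fb p l '' Set.Ico k l))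

/-! ### Auxiliary lemmas -/

lemma Xe_eq_min (p l i : ℕ) : Xe p l i = Xe p l (min i l) := by
  funext j
  simp only [Xe]
  split_ifs with h1 h2 h2
  · congr 1; omega
  · exfalso; omega
  · exfalso; omega
  · rfl

lemma Xe_l (p l : ℕ) : Xe p l l = 1 := by
  funext j
  simp only [Xe, if_pos (min_le_right j l), Nat.sub_self, pow_zero, Pi.one_apply]

lemma Xe_mul (p l i i' : ℕ) :
    Xe p l i * Xe p l i' = ((p:ℤ) ^ (l - max i i')) • Xe p l (min i i') := by
  funext j
  simp only [Xe, Pi.mul_apply, Pi.smul_apply, smul_eq_mul]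
  split_ifs <;>
    first
      | (rw [← pow_add, ← pow_add]; congr 1; omega)
      | (exfalso; omega)
      | ring

/-- The `ℤ`-span of the mark vectors `Xe p l 0, …, Xe p l l`. -/
def Vspan (p l : ℕ) : Submodule ℤ (ℕ → ℤ) :=
  Submodule.span ℤ (Set.range fun i : Fin (l+1) => Xe p l (i : ℕ))

lemma Xe_mem_Vspan (p l i : ℕ) : Xe p l i ∈ Vspan p l := by
  rw [Xe_eq_min]
  exact Submodule.subset_span ⟨⟨min i l, by omega⟩, rfl⟩

lemma Vspan_mul (p l : ℕ) {a b : ℕ → ℤ} (ha : a ∈ Vspan p l) (hb : b ∈ Vspan p l) :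
    a * b ∈ Vspan p l := by
  rw [Vspan, Submodule.mem_span_range_iff_exists_fun] at ha hb
  obtain ⟨c, rfl⟩ := ha
  obtain ⟨d, rfl⟩ := hb
  rw [Finset.sum_mul_sum]
  apply Submodule.sum_mem
  intro i _
  apply Submodule.sum_mem
  intro i' _
  have key : (c i • Xe p l (i:ℕ)) * (d i' • Xe p l (i':ℕ))
      = (c i * d i' * (p:ℤ) ^ (l - max (i:ℕ) (i':ℕ))) • Xe p l (min (i:ℕ) (i':ℕ)) := by
    rw [smul_mul_assoc, mul_smul_comm, Xe_mul, smul_smul, smul_smul]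
  rw [key]
  exact Submodule.smul_mem _ _ (Xe_mem_Vspan p l _)

/-- The span of the basis vectors as a subring. -/
def Vring (p l : ℕ) : Subring (ℕ → ℤ) where
  carrier := Vspan p l
  zero_mem' := (Vspan p l).zero_mem
  one_mem' := by rw [← Xe_l p l]; exact Xe_mem_Vspan p l l
  add_mem' := fun h h' => (Vspan p l).add_mem h h'
  neg_mem' := fun h => (Vspan p l).neg_mem h
  mul_mem' := fun h h' => Vspan_mul p l h h'

lemma exists_repr (p l : ℕ) (x : BR p l) :
    ∃ c : Fin (l+1) → ℤ, (∑ i, c i • Xe p l (i : ℕ)) = (x : ℕ → ℤ) := by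
  have hle : BR p l ≤ Vring p l :=
    Subring.closure_le.mpr (by rintro _ ⟨i, rfl⟩; exact Xe_mem_Vspan p l i)
  have hx : (x : ℕ → ℤ) ∈ Vspan p l := hle x.2
  rw [Vspan, Submodule.mem_span_range_iff_exists_fun] at hx
  exact hx

lemma BR_coe_sum {p l : ℕ} {ι : Type*} (s : Finset ι) (f : ι → BR p l) :
    ((∑ i ∈ s, f i : BR p l) : ℕ → ℤ) = ∑ i ∈ s, ((f i : ℕ → ℤ)) :=
  map_sum ((BR p l).subtype) f s

lemma BR_coe_zsmul {p l : ℕ} (n : ℤ) (x : BR p l) :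
    ((n • x : BR p l) : ℕ → ℤ) = n • (x : ℕ → ℤ) :=
  map_zsmul ((BR p l).subtype) n x

lemma BR_coe_zsmul_apply {p l : ℕ} (n : ℤ) (x : BR p l) (j : ℕ) :
    ((n • x : BR p l) : ℕ → ℤ) j = n * (x : ℕ → ℤ) j := by
  rw [BR_coe_zsmul]; rfl

lemma Fb_coe (p l i j : ℕ) :
    ((Fb p l i : BR p l) : ℕ → ℤ) j = Xe p l i j - (p:ℤ) ^ (l - i) := by
  have h : ((Fb p l i : BR p l) : ℕ → ℤ) j
      = Xe p l i j - (((p : BR p l) ^ (l - i) : BR p l) : ℕ → ℤ) j := rfl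
  rw [h]
  congr 1


/-- The "marks divisible by q up to k" ideal. -/
def Kid (p l : ℕ) (q : ℤ) (k : ℕ) : Ideal (BR p l) where
  carrier := {x | ∀ j, j ≤ k → q ∣ (x : ℕ → ℤ) j}
  zero_mem' := fun j _ => dvd_zero q
  add_mem' := by
    intro a b ha hb j hj
    have : ((a + b : BR p l) : ℕ → ℤ) j = (a : ℕ → ℤ) j + (b : ℕ → ℤ) j := rfl
    rw [this]
    exact dvd_add (ha j hj) (hb j hj)
  smul_mem' := by
    intro r x hx j hj
    have : ((r • x : BR p l) : ℕ → ℤ) j = (r : ℕ → ℤ) j * (x : ℕ → ℤ) j := rfl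
    rw [this]
    exact Dvd.dvd.mul_left (hx j hj) _

lemma mem_Kid {p l : ℕ} {q : ℤ} {k : ℕ} {x : BR p l} :
    x ∈ Kid p l q k ↔ ∀ j, j ≤ k → q ∣ (x : ℕ → ℤ) j := Iff.rfl

lemma Jb_le_Kid (p l k : ℕ) (q : ℤ) : Jb p l k q ≤ Kid p l q k := by
  rw [Jb, Ideal.span_le]
  intro y hy
  rcases hy with rfl | ⟨i, ⟨hi1, hi2⟩, rfl⟩
  · rw [SetLike.mem_coe, mem_Kid]
    intro j _
    have : (((q : ℤ) : BR p l) : ℕ → ℤ) j = q := by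
      rw [SubringClass.coe_intCast]; rfl
    rw [this]
  · rw [SetLike.mem_coe, mem_Kid]
    intro j hj
    have hXe : Xe p l i j = (p:ℤ) ^ (l - i) := by
      rw [Xe, if_pos (by omega : min j l ≤ i)]
    rw [Fb_coe, hXe, sub_self]
    exact dvd_zero q

/-- Main characterization: `J_{l,k}(q)` consists of the elements all of whose
marks at `j ≤ k` are divisible by `q`. -/
lemma mem_Jb_iff (p q l k : ℕ) (hp : p.Prime) (hq : q.Prime) (hpq : q ≠ p) (hk : k ≤ l)
    (x : BR p l) :
    x ∈ Jb p l k (q:ℤ) ↔ ∀ j, j ≤ k → (q:ℤ) ∣ (x : ℕ → ℤ) j := by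
  constructor
  · exact fun h => Jb_le_Kid p l k (q:ℤ) h
  · intro hdvd
    obtain ⟨c, hc⟩ := exists_repr p l x
    have hval : ∀ j, j ≤ l → (x : ℕ → ℤ) j
        = ∑ i : Fin (l+1), (if j ≤ (i:ℕ) then c i * (p:ℤ) ^ (l - (i:ℕ)) else 0) := by
      intro j hj
      rw [← hc, Finset.sum_apply]
      refine Finset.sum_congr rfl fun i _ => ?_
      simp only [Pi.smul_apply, Xe, smul_eq_mul]
      rw [min_eq_left hj]
      split_ifs <;> ring
    have key : ∀ (m : ℤ) (e : ℕ), (q:ℤ) ∣ m * (p:ℤ) ^ e → (q:ℤ) ∣ m := by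
      intro m e hd
      have hqZ : Prime (q:ℤ) := Nat.prime_iff_prime_int.mp hq
      rcases hqZ.dvd_mul.mp hd with h | h
      · exact h
      · exfalso
        have : (q:ℤ) ∣ (p:ℤ) := hqZ.dvd_of_dvd_pow h
        have : q ∣ p := Int.ofNat_dvd.mp this
        exact hpq ((Nat.prime_dvd_prime_iff_eq hq hp).mp this)
    have hcdvd : ∀ i : Fin (l+1), (i:ℕ) < k → (q:ℤ) ∣ c i := by
      intro i hik
      have hjl : (i:ℕ) < l := by omega
      have hdiff : (x : ℕ → ℤ) (i:ℕ) - (x : ℕ → ℤ) ((i:ℕ)+1)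
          = c i * (p:ℤ) ^ (l - (i:ℕ)) := by
        rw [hval (i:ℕ) (by omega), hval ((i:ℕ)+1) (by omega), ← Finset.sum_sub_distrib]
        rw [Finset.sum_eq_single i]
        · rw [if_pos le_rfl, if_neg (by omega), sub_zero]
        · intro b _ hb
          have hbne : (b:ℕ) ≠ (i:ℕ) := fun h => hb (Fin.ext h)
          split_ifs <;> first | (exfalso; omega) | ring
        · intro h; exact absurd (Finset.mem_univ i) h
      have h1 : (q:ℤ) ∣ (x : ℕ → ℤ) (i:ℕ) := hdvd (i:ℕ) (by omega)
      have h2 : (q:ℤ) ∣ (x : ℕ → ℤ) ((i:ℕ)+1) := hdvd ((i:ℕ)+1) hik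
      exact key (c i) (l - (i:ℕ)) (hdiff ▸ dvd_sub h1 h2)
    -- decomposition of x
    have hdecomp : x =
        (∑ i ∈ Finset.univ.filter (fun i : Fin (l+1) => (i:ℕ) < k), c i • Xb p l (i:ℕ))
        + (∑ i ∈ Finset.univ.filter (fun i : Fin (l+1) => k ≤ (i:ℕ) ∧ (i:ℕ) < l),
            c i • Fb p l (i:ℕ))
        + ((x : ℕ → ℤ) k) • (1 : BR p l) := by
      apply Subtype.ext
      funext j
      have hA : (((∑ i ∈ Finset.univ.filter (fun i : Fin (l+1) => (i:ℕ) < k),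
            c i • Xb p l (i:ℕ) : BR p l)) : ℕ → ℤ) j
          = ∑ i ∈ Finset.univ.filter (fun i : Fin (l+1) => (i:ℕ) < k),
              c i * Xe p l (i:ℕ) j := by
        rw [BR_coe_sum, Finset.sum_apply]
        exact Finset.sum_congr rfl fun i _ => BR_coe_zsmul_apply _ _ _
      have hB : (((∑ i ∈ Finset.univ.filter (fun i : Fin (l+1) => k ≤ (i:ℕ) ∧ (i:ℕ) < l),
            c i • Fb p l (i:ℕ) : BR p l)) : ℕ → ℤ) j
          = ∑ i ∈ Finset.univ.filter (fun i : Fin (l+1) => k ≤ (i:ℕ) ∧ (i:ℕ) < l),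
              c i * (Xe p l (i:ℕ) j - (p:ℤ) ^ (l - (i:ℕ))) := by
        rw [BR_coe_sum, Finset.sum_apply]
        exact Finset.sum_congr rfl fun i _ => by
          rw [BR_coe_zsmul_apply, Fb_coe]
      have hC : ((((x : ℕ → ℤ) k) • (1 : BR p l) : BR p l) : ℕ → ℤ) j = (x : ℕ → ℤ) k := by
        rw [BR_coe_zsmul_apply]
        simp
      have e0 : ∀ (a b d : BR p l), ((a + b + d : BR p l) : ℕ → ℤ) j
          = (a : ℕ → ℤ) j + (b : ℕ → ℤ) j + (d : ℕ → ℤ) j := fun _ _ _ => rfl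
      rw [e0, hA, hB, hC]
      have hL : (x : ℕ → ℤ) j = ∑ i : Fin (l+1), c i * Xe p l (i:ℕ) j := by
        rw [← hc, Finset.sum_apply]
        exact Finset.sum_congr rfl fun i _ => rfl
      rw [hL, hval k hk, Finset.sum_filter, Finset.sum_filter,
        ← Finset.sum_add_distrib, ← Finset.sum_add_distrib]
      refine Finset.sum_congr rfl fun i _ => ?_
      have hil : (i:ℕ) < l + 1 := i.isLt
      simp only [Xe]
      split_ifs <;> first | (exfalso; omega) | ring
    -- membership
    have hqJ : (((q:ℕ):ℤ) : BR p l) ∈ Jb p l k (q:ℤ) :=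
      Ideal.subset_span (Set.mem_insert _ _)
    have hdvd_mem : ∀ (m : ℤ) (y : BR p l), (q:ℤ) ∣ m → m • y ∈ Jb p l k (q:ℤ) := by
      rintro m y ⟨d, rfl⟩
      have e : ((q:ℤ) * d) • y = ((d : BR p l) * y) * (((q:ℕ):ℤ) : BR p l) := by
        rw [zsmul_eq_mul]; push_cast; ring
      rw [e]
      exact Ideal.mul_mem_left _ _ hqJ
    rw [hdecomp]
    refine Ideal.add_mem _ (Ideal.add_mem _ ?_ ?_) ?_
    · apply Submodule.sum_mem
      intro i hi
      rw [Finset.mem_filter] at hi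
      exact hdvd_mem _ _ (hcdvd i hi.2)
    · apply Submodule.sum_mem
      intro i hi
      rw [Finset.mem_filter] at hi
      have hFb : Fb p l (i:ℕ) ∈ Jb p l k (q:ℤ) :=
        Ideal.subset_span (Set.mem_insert_of_mem _ ⟨(i:ℕ), ⟨hi.2.1, hi.2.2⟩, rfl⟩)
      exact zsmul_mem hFb (c i)
    · exact hdvd_mem _ _ (hdvd k le_rfl)

/-- For a prime `q ≠ p`, there is no ideal of `R_ℓ` strictly between
`J_{ℓ,k+1}(q)` and `J_{ℓ,k}(q)`. -/
theorem no_ideal_between_Jq (p q l k : ℕ) (hp : p.Prime) (hq : q.Prime) (hpq : q ≠ p)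
    (hl : 1 ≤ l) (hk : k ≤ l - 1) (I : Ideal (BR p l))
    (h1 : Jb p l (k+1) (q : ℤ) ≤ I) (h2 : I ≤ Jb p l k (q : ℤ)) :
    I = Jb p l (k+1) (q : ℤ) ∨ I = Jb p l k (q : ℤ) := by
  have hk1 : k + 1 ≤ l := by omega
  have hkl : k ≤ l := by omega
  by_cases hcase : ∀ x ∈ I, (q:ℤ) ∣ (x : ℕ → ℤ) (k+1)
  · left
    refine le_antisymm (fun x hx => ?_) h1
    rw [mem_Jb_iff p q l (k+1) hp hq hpq hk1]
    intro j hj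
    rcases Nat.lt_or_ge j (k+1) with h | h
    · exact (mem_Jb_iff p q l k hp hq hpq hkl x).mp (h2 hx) j (by omega)
    · have hj' : j = k + 1 := by omega
      rw [hj']
      exact hcase x hx
  · right
    push_neg at hcase
    obtain ⟨x₀, hx₀I, hx₀⟩ := hcase
    refine le_antisymm h2 (fun y hy => ?_)
    have hqZ : Prime ((q:ℕ):ℤ) := Nat.prime_iff_prime_int.mp hq
    have hcop : IsCoprime ((q:ℕ):ℤ) ((x₀ : ℕ → ℤ) (k+1)) :=
      (Prime.coprime_iff_not_dvd hqZ).mpr hx₀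
    obtain ⟨v, u, huv⟩ := hcop
    set a := (x₀ : ℕ → ℤ) (k+1) with ha
    set b := (y : ℕ → ℤ) (k+1) with hb
    -- z := y - (b*u) • x₀ - (b*v) • q
    set z : BR p l := y - (b*u) • x₀ - (b*v) • (((q:ℕ):ℤ) : BR p l) with hz
    have hzval : ∀ j, (z : ℕ → ℤ) j
        = (y : ℕ → ℤ) j - (b*u) * (x₀ : ℕ → ℤ) j - (b*v) * (q:ℤ) := by
      intro j
      have e : (z : ℕ → ℤ) j = (y : ℕ → ℤ) j - ((b*u) • x₀ : BR p l).1 j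
          - ((b*v) • (((q:ℕ):ℤ) : BR p l) : BR p l).1 j := rfl
      rw [e, BR_coe_zsmul_apply, BR_coe_zsmul_apply]
      have : ((((q:ℕ):ℤ) : BR p l) : ℕ → ℤ) j = (q:ℤ) := by
        rw [SubringClass.coe_intCast]; rfl
      rw [this]
    have hzmem : z ∈ Jb p l (k+1) (q:ℤ) := by
      rw [mem_Jb_iff p q l (k+1) hp hq hpq hk1]
      intro j hj
      rcases Nat.lt_or_ge j (k+1) with h | h
      · -- j ≤ k : all three pieces divisible
        rw [hzval j]
        have d1 : (q:ℤ) ∣ (y : ℕ → ℤ) j :=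
          (mem_Jb_iff p q l k hp hq hpq hkl y).mp hy j (by omega)
        have d2 : (q:ℤ) ∣ (x₀ : ℕ → ℤ) j :=
          (mem_Jb_iff p q l k hp hq hpq hkl x₀).mp (h2 hx₀I) j (by omega)
        exact dvd_sub (dvd_sub d1 (Dvd.dvd.mul_left d2 _)) (Dvd.dvd.mul_left dvd_rfl _)
      · have hj' : j = k + 1 := by omega
        rw [hj', hzval (k+1), ← ha, ← hb]
        have : b - b * u * a - b * v * (q:ℤ) = b * (1 - (u * a + v * (q:ℤ))) := by ring
        rw [this, show (1 : ℤ) - (u * a + v * (q:ℤ)) = 0 by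
          rw [← huv]; ring, mul_zero]
        exact dvd_zero _
    have hzI : z ∈ I := h1 hzmem
    have hqI : (((q:ℕ):ℤ) : BR p l) ∈ I :=
      h1 (Ideal.subset_span (Set.mem_insert _ _))
    have : y = z + (b*u) • x₀ + (b*v) • (((q:ℕ):ℤ) : BR p l) := by
      rw [hz]; ring
    rw [this]
    exact Submodule.add_mem _ (Submodule.add_mem _ hzI (zsmul_mem hx₀I _)) (zsmul_mem hqI _)
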